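/- Let c ∈ ℝ and let V : U → ℝ be differentiable on an open set U ⊆ ℝ³ of points (X,Y,T) with 3T + 2 ≠ 0, satisfying identically 2(3T + 2)V² + 2YV + Y²/(3T + 2) = cT + X, and suppose 2(3T + 2)V + Y ≠ 0 on U. Define p = −Y/(3T + 2) − V. Then on U: p_Y = (p² + 2Vp)_X. -/

import Mathlib

noncomputable def dX (F : ℝ × ℝ × ℝ → ℝ) (z : ℝ × ℝ × ℝ) : ℝ := fderiv ℝ F z (1, 0, 0)
noncomputable def dY (F : ℝ × ℝ × ℝ → ℝ) (z : ℝ × ℝ × ℝ) : ℝ := fderiv ℝ F z (0, 1, 0)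

/-- Points are `z = (X, Y, T)`, so `z.1 = X`, `z.2.1 = Y`, `z.2.2 = T`. -/
theorem m2_source_equation_p (c : ℝ) (U : Set (ℝ × ℝ × ℝ)) (hU : IsOpen U)
    (V : ℝ × ℝ × ℝ → ℝ) (hV : ∀ z ∈ U, DifferentiableAt ℝ V z)
    (hT : ∀ z ∈ U, 3 * z.2.2 + 2 ≠ 0)
    (hrel : ∀ z ∈ U,
      2 * (3 * z.2.2 + 2) * (V z) ^ 2 + 2 * z.2.1 * V z
        + z.2.1 ^ 2 / (3 * z.2.2 + 2) = c * z.2.2 + z.1)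
    (hnd : ∀ z ∈ U, 2 * (3 * z.2.2 + 2) * V z + z.2.1 ≠ 0)
    (p : ℝ × ℝ × ℝ → ℝ)
    (hp : p = fun z => -z.2.1 / (3 * z.2.2 + 2) - V z) :
    ∀ z ∈ U, dY p z = dX (fun w => (p w) ^ 2 + 2 * V w * p w) z := by
  subst hp
  intro z hz
  have hA : 3 * z.2.2 + 2 ≠ 0 := hT z hz
  have hVd : HasFDerivAt V (fderiv ℝ V z) z := (hV z hz).hasFDerivAt
  set DV := fderiv ℝ V z with hDV
  have hXc : HasFDerivAt (fun w : ℝ × ℝ × ℝ => w.1)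
      (ContinuousLinearMap.fst ℝ ℝ (ℝ × ℝ)) z := hasFDerivAt_fst
  have hYc : HasFDerivAt (fun w : ℝ × ℝ × ℝ => w.2.1)
      ((ContinuousLinearMap.fst ℝ ℝ ℝ).comp (ContinuousLinearMap.snd ℝ ℝ (ℝ × ℝ))) z :=
    hasFDerivAt_fst.comp z hasFDerivAt_snd
  have hTc : HasFDerivAt (fun w : ℝ × ℝ × ℝ => w.2.2)
      ((ContinuousLinearMap.snd ℝ ℝ ℝ).comp (ContinuousLinearMap.snd ℝ ℝ (ℝ × ℝ))) z :=
    hasFDerivAt_snd.comp z hasFDerivAt_snd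
  have hAc := (hTc.const_mul (3:ℝ)).add_const (2:ℝ)
  have hinv := ((hasDerivAt_inv hA).hasFDerivAt).comp z hAc
  simp only [Function.comp_def] at hinv
  -- derivative of the constraint function
  have hGd := ((((hAc.const_mul (2:ℝ)).mul (hVd.mul hVd)).add
      ((hYc.const_mul (2:ℝ)).mul hVd)).add ((hYc.mul hYc).mul hinv)).sub
      ((hTc.const_mul c).add hXc)
  have hG0 : fderiv ℝ (fun w : ℝ × ℝ × ℝ =>
      2 * (3 * w.2.2 + 2) * (V w * V w) + 2 * w.2.1 * V w
        + w.2.1 * w.2.1 * (3 * w.2.2 + 2)⁻¹ - (c * w.2.2 + w.1)) z = 0 := by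
    have hev : (fun w : ℝ × ℝ × ℝ =>
        2 * (3 * w.2.2 + 2) * (V w * V w) + 2 * w.2.1 * V w
          + w.2.1 * w.2.1 * (3 * w.2.2 + 2)⁻¹ - (c * w.2.2 + w.1)) =ᶠ[nhds z]
        (fun _ => (0:ℝ)) := by
      filter_upwards [hU.mem_nhds hz] with w hw
      linear_combination hrel w hw
    rw [hev.fderiv_eq]
    exact fderiv_const_apply 0
  have hGD := hGd.fderiv
  erw [hG0] at hGD
  have hEx := congrArg (fun L => L ((1:ℝ),(0:ℝ),(0:ℝ))) hGD
  have hEy := congrArg (fun L => L ((0:ℝ),(1:ℝ),(0:ℝ))) hGD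
  simp only [ContinuousLinearMap.add_apply, ContinuousLinearMap.sub_apply,
    ContinuousLinearMap.smul_apply, ContinuousLinearMap.comp_apply,
    ContinuousLinearMap.coe_fst', ContinuousLinearMap.coe_snd',
    ContinuousLinearMap.zero_apply, ContinuousLinearMap.smulRight_apply,
    ContinuousLinearMap.one_apply, smul_eq_mul, Pi.mul_apply, nsmul_eq_mul,
    ContinuousLinearMap.toSpanSingleton_apply] at hEx hEy
  -- derivative of p and of the flux
  have hpd := ((hYc.neg).mul hinv).sub hVd
  have hgd := (hpd.mul hpd).add ((hVd.const_mul (2:ℝ)).mul hpd)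
  have e1 : (fun w : ℝ × ℝ × ℝ => -w.2.1 / (3 * w.2.2 + 2) - V w)
      = (fun w : ℝ × ℝ × ℝ => -w.2.1 * (3 * w.2.2 + 2)⁻¹ - V w) := by
    funext w; rw [div_eq_mul_inv]
  have e2 : (fun w : ℝ × ℝ × ℝ =>
        (-w.2.1 / (3 * w.2.2 + 2) - V w) ^ 2 + 2 * V w * (-w.2.1 / (3 * w.2.2 + 2) - V w))
      = (fun w : ℝ × ℝ × ℝ =>
        (-w.2.1 * (3 * w.2.2 + 2)⁻¹ - V w) * (-w.2.1 * (3 * w.2.2 + 2)⁻¹ - V w)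
          + 2 * V w * (-w.2.1 * (3 * w.2.2 + 2)⁻¹ - V w)) := by
    funext w; rw [div_eq_mul_inv, pow_two]
  simp only [dX, dY, e1, e2]
  erw [hpd.fderiv, hgd.fderiv]
  simp only [ContinuousLinearMap.add_apply, ContinuousLinearMap.sub_apply,
    ContinuousLinearMap.smul_apply, ContinuousLinearMap.comp_apply,
    ContinuousLinearMap.coe_fst', ContinuousLinearMap.coe_snd',
    ContinuousLinearMap.neg_apply, ContinuousLinearMap.smulRight_apply,
    ContinuousLinearMap.one_apply, smul_eq_mul, Pi.mul_apply, nsmul_eq_mul,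
    ContinuousLinearMap.toSpanSingleton_apply, Pi.neg_apply, Pi.sub_apply]
  have hW : 2 * (3 * z.2.2 + 2) * V z + z.2.1 ≠ 0 := hnd z hz
  field_simp at hEx hEy
  have hax : DV (1, 0, 0) = 1 / (2 * (2 * (3 * z.2.2 + 2) * V z + z.2.1)) := by
    rw [eq_div_iff (mul_ne_zero two_ne_zero hW)]
    apply mul_left_cancel₀ (pow_ne_zero 2 hA)
    linear_combination -hEx
  have hby : DV (0, 1, 0)
      = -(V z * (3 * z.2.2 + 2) + z.2.1)
        / ((2 * (3 * z.2.2 + 2) * V z + z.2.1) * (3 * z.2.2 + 2)) := by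
    rw [eq_div_iff (mul_ne_zero hW hA)]
    apply mul_left_cancel₀ hA
    linear_combination (-1/2 : ℝ) * hEy
  rw [hax, hby]
  field_simp
  ring
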